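/- Let d ≥ 1, let G, D, λ > 0, let 𝒟 ⊆ ℝ^d be a convex set of diameter at most D, let f_1,…,f_T : ℝ^d → ℝ be differentiable and λ-strongly convex on 𝒟 (i.e., f_t(x₁) ≥ f_t(x₂) + ⟨∇f_t(x₂), x₁ − x₂⟩ + (λ/2)‖x₁ − x₂‖² for all x₁, x₂ ∈ 𝒟), let x_t, x* ∈ 𝒟, set g_t = ∇f_t(x_t) with ‖g_t‖ ≤ G, let A ≥ 0, and set V = G² Σ_{t=1}^T ‖x_t − x*‖². If Σ_{t=1}^T ⟨g_t, x_t − x*⟩ ≤ 3√(V·A) + 10GD·A, then Σ_{t=1}^T f_t(x_t) − Σ_{t=1}^T f_t(x*) ≤ (10GD + 9G²/(2λ)) A. -/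

import Mathlib

lemma amgm_aux (a b s : ℝ) (ha : 0 ≤ a) (hb : 0 ≤ b) (hs : 0 ≤ s)
    (h : 9 * s ^ 2 ≤ 4 * (a * b)) : 3 * s ≤ a + b := by
  nlinarith [sq_nonneg (a - b), sq_nonneg (a + b), mul_nonneg ha hb]


theorem maler_strongly_convex_corollary
    (d T : ℕ) (hd : 1 ≤ d)
    (G D lam : ℝ) (hG : 0 < G) (hD : 0 < D) (hlam : 0 < lam)
    (𝒟 : Set (EuclideanSpace ℝ (Fin d))) (hconv : Convex ℝ 𝒟)
    (hdiam : ∀ a ∈ 𝒟, ∀ b ∈ 𝒟, ‖a - b‖ ≤ D)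
    (f : ℕ → EuclideanSpace ℝ (Fin d) → ℝ)
    (x : ℕ → EuclideanSpace ℝ (Fin d)) (xstar : EuclideanSpace ℝ (Fin d))
    (hx : ∀ t ∈ Finset.Icc 1 T, x t ∈ 𝒟) (hxstar : xstar ∈ 𝒟)
    (g : ℕ → EuclideanSpace ℝ (Fin d))
    (hgrad : ∀ t ∈ Finset.Icc 1 T, HasGradientAt (f t) (g t) (x t))
    (hsc : ∀ t ∈ Finset.Icc 1 T, ∀ x₁ ∈ 𝒟, ∀ x₂ ∈ 𝒟, ∀ g₂ : EuclideanSpace ℝ (Fin d),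
      HasGradientAt (f t) g₂ x₂ →
      f t x₁ ≥ f t x₂ + (inner ℝ g₂ (x₁ - x₂) : ℝ) + (lam / 2) * ‖x₁ - x₂‖^2)
    (hg : ∀ t ∈ Finset.Icc 1 T, ‖g t‖ ≤ G)
    (A V : ℝ) (hA : 0 ≤ A)
    (hV : V = G^2 * ∑ t ∈ Finset.Icc 1 T, ‖x t - xstar‖^2)
    (hbound : (∑ t ∈ Finset.Icc 1 T, (inner ℝ (g t) (x t - xstar) : ℝ))
        ≤ 3 * Real.sqrt (V * A) + 10 * G * D * A) :
    (∑ t ∈ Finset.Icc 1 T, f t (x t)) - (∑ t ∈ Finset.Icc 1 T, f t xstar)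
      ≤ (10 * G * D + 9 * G^2 / (2 * lam)) * A := by
  set S : ℝ := ∑ t ∈ Finset.Icc 1 T, ‖x t - xstar‖^2 with hS
  have hS0 : 0 ≤ S := Finset.sum_nonneg fun t _ => sq_nonneg _
  -- per-term strong convexity gives regret bound
  have hterm : ∀ t ∈ Finset.Icc 1 T,
      f t (x t) - f t xstar ≤ (inner ℝ (g t) (x t - xstar) : ℝ) - (lam / 2) * ‖x t - xstar‖^2 := by
    intro t ht
    have h := hsc t ht xstar hxstar (x t) (hx t ht) (g t) (hgrad t ht)
    have hn : ‖xstar - x t‖ = ‖x t - xstar‖ := norm_sub_rev _ _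
    have hi : (inner ℝ (g t) (xstar - x t) : ℝ) = -(inner ℝ (g t) (x t - xstar) : ℝ) := by
      rw [← inner_neg_right]; congr 1; abel
    rw [hn, hi] at h
    linarith
  have hsum : (∑ t ∈ Finset.Icc 1 T, f t (x t)) - (∑ t ∈ Finset.Icc 1 T, f t xstar)
      ≤ (∑ t ∈ Finset.Icc 1 T, (inner ℝ (g t) (x t - xstar) : ℝ)) - (lam / 2) * S := by
    rw [← Finset.sum_sub_distrib, hS, Finset.mul_sum, ← Finset.sum_sub_distrib]
    exact Finset.sum_le_sum hterm
  -- AM-GM: 3√(VA) ≤ (lam/2) S + 9G²/(2lam) A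
  have hVA : 0 ≤ V * A := mul_nonneg (by rw [hV]; positivity) hA
  have hs0 : 0 ≤ Real.sqrt (V * A) := Real.sqrt_nonneg _
  have hs2 : Real.sqrt (V * A) ^ 2 = V * A := Real.sq_sqrt hVA
  have hamgm : 3 * Real.sqrt (V * A) ≤ (lam / 2) * S + 9 * G^2 / (2 * lam) * A := by
    apply amgm_aux _ _ _ (by positivity) (by positivity) hs0
    have hab : ((lam / 2) * S) * (9 * G^2 / (2 * lam) * A) = (9/4) * (V * A) := by
      field_simp [hV]; rw [hV]; ring
    nlinarith [hs2, hab]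
  linarith
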